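/- arXiv:2404.19261 — 3 statements merged into one kernel-verified Lean document; each statement's English description precedes it below -/
import Mathlib

section
/- Let A and B be n×n real symmetric PSD matrices with ‖A‖_op < 1. If the largest eigenvalue of A + B is at least 1, then the largest eigenvalue of (I − A)^{-1/2} B (I − A)^{-1/2} is at least 1. -/
open Matrix
open scoped Matrix.Norms.L2Operator

lemma dot_symm_mulVec {n : ℕ} {S : Matrix (Fin n) (Fin n) ℝ} (hS : Sᵀ = S)
    (x y : Fin n → ℝ) : x ⬝ᵥ (S *ᵥ y) = (S *ᵥ x) ⬝ᵥ y := by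
  rw [dotProduct_mulVec, ← mulVec_transpose, hS]

lemma dotProduct_self_pos {n : ℕ} {x : Fin n → ℝ} (hx : x ≠ 0) : 0 < x ⬝ᵥ x := by
  have h1 : 0 ≤ x ⬝ᵥ x := Finset.sum_nonneg fun i _ => mul_self_nonneg (x i)
  exact h1.lt_of_ne fun h0 => hx (dotProduct_self_eq_zero.mp h0.symm)

lemma smul_one_sub_posSemidef {n : ℕ} {M : Matrix (Fin n) (Fin n) ℝ}
    (hM : M.IsHermitian) {c : ℝ} (hc : ∀ i, hM.eigenvalues i ≤ c) :
    (c • (1 : Matrix (Fin n) (Fin n) ℝ) - M).PosSemidef := by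
  set U : Matrix (Fin n) (Fin n) ℝ := (hM.eigenvectorUnitary : Matrix (Fin n) (Fin n) ℝ) with hU
  have hUU : U * star U = 1 := (Unitary.mem_iff.mp hM.eigenvectorUnitary.prop).2
  have hdiag : c • (1 : Matrix (Fin n) (Fin n) ℝ) - M
      = U * diagonal (fun i => c - hM.eigenvalues i) * star U := by
    conv_lhs => rw [hM.spectral_theorem]
    have h2 : diagonal (fun i => c - hM.eigenvalues i)
        = c • (1 : Matrix (Fin n) (Fin n) ℝ) - diagonal (RCLike.ofReal ∘ hM.eigenvalues) := by
      rw [smul_one_eq_diagonal, ← diagonal_sub]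
      rfl
    rw [h2, Matrix.mul_sub, Matrix.sub_mul]
    congr 1
    rw [mul_smul_comm, smul_mul_assoc, mul_one, hUU]
  rw [hdiag, star_eq_conjTranspose]
  exact (posSemidef_diagonal_iff.mpr fun i => by simp [hc i]).mul_mul_conjTranspose_same U

/-- For symmetric PSD `A`, `B` with `‖A‖ < 1`: if the largest eigenvalue of
`A + B` is at least `1`, then so is the largest eigenvalue of
`(I − A)^{-1/2} B (I − A)^{-1/2}`, where `R` denotes the PSD square root of
`(I − A)⁻¹`. -/
theorem maxEig_conj_ge_one {n : ℕ} (hn : 0 < n)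
    (A B : Matrix (Fin n) (Fin n) ℝ)
    (hA : A.PosSemidef) (hB : B.PosSemidef)
    (hAnorm : ‖A‖ < 1)
    (R : Matrix (Fin n) (Fin n) ℝ)
    (hR : R.PosSemidef) (hRsq : R * R = (1 - A)⁻¹)
    (h : 1 ≤ sSup (spectrum ℝ (A + B))) :
    1 ≤ sSup (spectrum ℝ (R * B * R)) := by
  classical
  have : Nonempty (Fin n) := ⟨⟨0, hn⟩⟩
  have hABh : (A + B).IsHermitian := hA.1.add hB.1
  have hRT : Rᵀ = R := (by simpa using hR.1 : R.IsSymm)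
  have hBT : Bᵀ = B := (by simpa using hB.1 : B.IsSymm)
  have hMh : (R * B * R).IsHermitian := by
    have : (R * B * R)ᴴ = R * B * R := by
      simp only [conjTranspose_mul]
      simp only [conjTranspose_eq_transpose_of_trivial, hRT, hBT, Matrix.mul_assoc]
    exact this
  -- invertibility of 1 - A
  have hone : IsUnit (1 - A) := isUnit_one_sub_of_norm_lt_one hAnorm
  have hdet : IsUnit (1 - A).det := (Matrix.isUnit_iff_isUnit_det _).mp hone
  -- R * (1 - A) * R = 1
  have hc1 : (1 - A)⁻¹ * R = R * (1 - A)⁻¹ := by rw [← hRsq, Matrix.mul_assoc]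
  have hcomm : R * (1 - A) = (1 - A) * R := by
    calc R * (1 - A) = ((1 - A) * (1 - A)⁻¹) * R * (1 - A) := by
          rw [Matrix.mul_nonsing_inv _ hdet, one_mul]
      _ = (1 - A) * ((1 - A)⁻¹ * R) * (1 - A) := by rw [Matrix.mul_assoc (1 - A)]
      _ = (1 - A) * (R * (1 - A)⁻¹) * (1 - A) := by rw [hc1]
      _ = (1 - A) * (R * ((1 - A)⁻¹ * (1 - A))) := by simp only [Matrix.mul_assoc]
      _ = (1 - A) * R := by rw [Matrix.nonsing_inv_mul _ hdet, mul_one]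
  have key : R * (1 - A) * R = 1 := by
    rw [hcomm, Matrix.mul_assoc, hRsq, Matrix.mul_nonsing_inv _ hdet]
  -- eigenvector of A + B with max eigenvalue
  have hspecAB : spectrum ℝ (A + B) = Set.range hABh.eigenvalues :=
    hABh.spectrum_real_eq_range_eigenvalues
  obtain ⟨i, hi⟩ : sSup (Set.range hABh.eigenvalues) ∈ Set.range hABh.eigenvalues :=
    Set.Nonempty.csSup_mem (Set.range_nonempty _) (Set.finite_range _)
  have hμ : 1 ≤ hABh.eigenvalues i := by rw [hi]; rwa [hspecAB] at h
  have hveq : (A + B) *ᵥ ⇑(hABh.eigenvectorBasis i)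
      = hABh.eigenvalues i • ⇑(hABh.eigenvectorBasis i) := hABh.mulVec_eigenvectorBasis i
  obtain ⟨v, hv⟩ : ∃ v : Fin n → ℝ, v = ⇑(hABh.eigenvectorBasis i) := ⟨_, rfl⟩
  rw [← hv] at hveq
  have hv0 : v ≠ 0 := by
    intro h0
    rw [hv] at h0
    exact hABh.eigenvectorBasis.orthonormal.ne_zero i (by ext j; exact congrFun h0 j)
  -- w = R⁻¹ v
  obtain ⟨w, hwdef⟩ : ∃ w : Fin n → ℝ, w = ((1 - A) * R) *ᵥ v := ⟨_, rfl⟩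
  have hw : R *ᵥ w = v := by
    rw [hwdef, mulVec_mulVec, ← Matrix.mul_assoc, key, one_mulVec]
  have hw0 : w ≠ 0 := by
    intro h0
    apply hv0
    rw [← hw, h0, mulVec_zero]
  have hww : 0 < w ⬝ᵥ w := dotProduct_self_pos hw0
  have hvv : 0 < v ⬝ᵥ v := dotProduct_self_pos hv0
  -- quadratic form identities
  have e1 : w ⬝ᵥ ((R * B * R) *ᵥ w) = v ⬝ᵥ (B *ᵥ v) := by
    calc w ⬝ᵥ ((R * B * R) *ᵥ w) = w ⬝ᵥ (R *ᵥ (B *ᵥ (R *ᵥ w))) := by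
          rw [mulVec_mulVec, mulVec_mulVec]
      _ = (R *ᵥ w) ⬝ᵥ (B *ᵥ (R *ᵥ w)) := dot_symm_mulVec hRT _ _
      _ = v ⬝ᵥ (B *ᵥ v) := by rw [hw]
  have e2 : v ⬝ᵥ ((1 - A) *ᵥ v) = w ⬝ᵥ w := by
    calc v ⬝ᵥ ((1 - A) *ᵥ v) = (R *ᵥ w) ⬝ᵥ ((1 - A) *ᵥ (R *ᵥ w)) := by rw [hw]
      _ = w ⬝ᵥ (R *ᵥ ((1 - A) *ᵥ (R *ᵥ w))) := (dot_symm_mulVec hRT _ _).symm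
      _ = w ⬝ᵥ ((R * (1 - A) * R) *ᵥ w) := by rw [mulVec_mulVec, mulVec_mulVec]
      _ = w ⬝ᵥ w := by rw [key, one_mulVec]
  have e3 : v ⬝ᵥ ((A + B) *ᵥ v) = hABh.eigenvalues i * (v ⬝ᵥ v) := by
    rw [hveq, dotProduct_smul, smul_eq_mul]
  have expand1 : v ⬝ᵥ ((A + B) *ᵥ v) = v ⬝ᵥ (A *ᵥ v) + v ⬝ᵥ (B *ᵥ v) := by
    rw [add_mulVec, dotProduct_add]
  have expand2 : v ⬝ᵥ ((1 - A) *ᵥ v) = v ⬝ᵥ v - v ⬝ᵥ (A *ᵥ v) := by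
    rw [sub_mulVec, dotProduct_sub, one_mulVec]
  have hlow : w ⬝ᵥ w ≤ w ⬝ᵥ ((R * B * R) *ᵥ w) := by
    rw [e1, ← e2, expand2]
    nlinarith [e3, expand1, hvv, hμ]
  -- upper bound via sSup of spectrum of M
  have hcb : ∀ j, hMh.eigenvalues j ≤ sSup (spectrum ℝ (R * B * R)) :=
    fun j => le_csSup ((Matrix.finite_real_spectrum (A := R * B * R)).bddAbove)
      (hMh.eigenvalues_mem_spectrum_real j)
  have hpsd := smul_one_sub_posSemidef hMh hcb
  have hq := hpsd.dotProduct_mulVec_nonneg w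
  have hq' : w ⬝ᵥ ((R * B * R) *ᵥ w) ≤ sSup (spectrum ℝ (R * B * R)) * (w ⬝ᵥ w) := by
    have hmv : ((sSup (spectrum ℝ (R * B * R))) • (1 : Matrix (Fin n) (Fin n) ℝ) - (R * B * R)) *ᵥ w
        = (sSup (spectrum ℝ (R * B * R))) • w - (R * B * R) *ᵥ w := by
      rw [sub_mulVec, smul_mulVec, one_mulVec]
    rw [hmv] at hq
    simp only [star_trivial, dotProduct_sub, dotProduct_smul, smul_eq_mul] at hq
    linarith
  nlinarith [hlow, hq', hww]
end

section
/- Let A, B be n×n real symmetric PSD matrices and suppose ‖A‖_op < 1. For the linear recursion p_{t+1} = (A + B) p_t on ℝⁿ, p_t → 0 as t → ∞ for every initial p_0 if and only if the largest eigenvalue of (I − A)⁻¹B is strictly less than 1. -/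
open Matrix Filter
open scoped Matrix.Norms.L2Operator

namespace RecursionAux

variable {n : ℕ}

/-- Congruence by an invertible matrix preserves positive definiteness. -/
lemma posDef_conj {C X : Matrix (Fin n) (Fin n) ℝ} (hX : X.PosDef) (hC : IsUnit C) :
    (Cᴴ * X * C).PosDef := by
  rw [Matrix.posDef_iff_dotProduct_mulVec] at hX ⊢
  refine ⟨Matrix.isHermitian_conjTranspose_mul_mul C hX.1, fun x hx => ?_⟩
  have hinj := Matrix.mulVec_injective_iff_isUnit.mpr hC
  have hCx : C *ᵥ x ≠ 0 := by
    intro h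
    exact hx (hinj (by simpa using h))
  simpa only [star_mulVec, dotProduct_mulVec, vecMul_vecMul] using hX.2 (x := C *ᵥ x) hCx

lemma isUnit_eigenvectorUnitary {P : Matrix (Fin n) (Fin n) ℝ} (hP : P.IsHermitian) :
    IsUnit (hP.eigenvectorUnitary : Matrix (Fin n) (Fin n) ℝ) :=
  ⟨⟨(hP.eigenvectorUnitary : Matrix (Fin n) (Fin n) ℝ),
    star (hP.eigenvectorUnitary : Matrix (Fin n) (Fin n) ℝ),
    Unitary.coe_mul_star_self _, Unitary.coe_star_mul_self _⟩, rfl⟩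

lemma ofReal_comp_eigenvalues {P : Matrix (Fin n) (Fin n) ℝ} (hP : P.IsHermitian) :
    (RCLike.ofReal ∘ hP.eigenvalues : Fin n → ℝ) = hP.eigenvalues := by
  funext i; simp [RCLike.ofReal]

/-- For a hermitian `P`, `1 - P` is positive definite iff all eigenvalues of `P` are `< 1`. -/
lemma posDef_one_sub_iff {P : Matrix (Fin n) (Fin n) ℝ} (hP : P.IsHermitian) :
    (1 - P).PosDef ↔ ∀ i, hP.eigenvalues i < 1 := by
  set U : Matrix (Fin n) (Fin n) ℝ := (hP.eigenvectorUnitary : Matrix (Fin n) (Fin n) ℝ) with hU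
  have h1 : star U * U = 1 := Unitary.coe_star_mul_self _
  have h2 : U * star U = 1 := Unitary.coe_mul_star_self _
  have hdecomp : P = U * diagonal hP.eigenvalues * star U := by
    conv_lhs => rw [hP.spectral_theorem]
    rw [ofReal_comp_eigenvalues hP, Unitary.conjStarAlgAut_apply, ← hU]
  have key : 1 - P = U * (1 - diagonal hP.eigenvalues) * star U := by
    rw [Matrix.mul_sub, Matrix.sub_mul, Matrix.mul_one, h2, ← hdecomp]
  have hDiag : (1 : Matrix (Fin n) (Fin n) ℝ) - diagonal hP.eigenvalues
      = diagonal (fun i => 1 - hP.eigenvalues i) := by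
    rw [← Matrix.diagonal_one, Matrix.diagonal_sub]
  constructor
  · intro h i
    have hconj := posDef_conj h (isUnit_eigenvectorUnitary hP)
    rw [key] at hconj
    have heq : Uᴴ * (U * (1 - diagonal hP.eigenvalues) * star U) * U
        = 1 - diagonal hP.eigenvalues := by
      rw [Matrix.star_eq_conjTranspose] at h1 h2
      calc Uᴴ * (U * (1 - diagonal hP.eigenvalues) * Uᴴ) * U
          = (Uᴴ * U) * (1 - diagonal hP.eigenvalues) * (Uᴴ * U) := by
            simp only [Matrix.mul_assoc]
        _ = 1 - diagonal hP.eigenvalues := by rw [h1, Matrix.one_mul, Matrix.mul_one]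
    rw [heq, hDiag] at hconj
    have := Matrix.posDef_diagonal_iff.mp hconj i
    linarith
  · intro h
    have hD : (1 - diagonal hP.eigenvalues).PosDef := by
      rw [hDiag]
      exact Matrix.posDef_diagonal_iff.mpr fun i => by linarith [h i]
    have hUstar : IsUnit (star U) := by
      exact ⟨⟨star U, U, Unitary.coe_star_mul_self _, Unitary.coe_mul_star_self _⟩, rfl⟩
    have hconj := posDef_conj hD hUstar
    rw [key]
    have : (star U)ᴴ = U := by
      rw [Matrix.star_eq_conjTranspose, Matrix.conjTranspose_conjTranspose]
    rwa [this] at hconj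

/-- For a hermitian `P` (with `n > 0`), the supremum of the real spectrum is `< 1`
iff all eigenvalues are `< 1`. -/
lemma sSup_spectrum_lt_iff (hn : 0 < n) {P : Matrix (Fin n) (Fin n) ℝ} (hP : P.IsHermitian) :
    sSup (spectrum ℝ P) < 1 ↔ ∀ i, hP.eigenvalues i < 1 := by
  haveI : Nonempty (Fin n) := Fin.pos_iff_nonempty.mp hn
  rw [Matrix.IsHermitian.spectrum_real_eq_range_eigenvalues hP,
    Set.Finite.csSup_lt_iff (Set.finite_range _) (Set.range_nonempty _)]
  simp

/-- If `‖A‖ < 1` (L2 operator norm) and `A` is hermitian then `1 - A` is positive definite. -/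
lemma posDef_one_sub_of_norm_lt {A : Matrix (Fin n) (Fin n) ℝ} (hA : A.IsHermitian)
    (h : ‖A‖ < 1) : (1 - A).PosDef := by
  rw [Matrix.posDef_iff_dotProduct_mulVec]
  refine ⟨Matrix.isHermitian_one.sub hA, fun x hx => ?_⟩
  set y : EuclideanSpace ℝ (Fin n) := (WithLp.equiv 2 (Fin n → ℝ)).symm x with hy
  have hy0 : y ≠ 0 := by
    simpa [hy] using hx
  have hnorm : 0 < ‖y‖ := norm_pos_iff.mpr hy0
  have hxx : x ⬝ᵥ x = ‖y‖ * ‖y‖ := by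
    rw [← real_inner_self_eq_norm_mul_norm]
    rw [hy, EuclideanSpace.inner_eq_star_dotProduct, dotProduct_comm]
    simp
  have hAx : x ⬝ᵥ (A *ᵥ x) ≤ ‖A‖ * (‖y‖ * ‖y‖) := by
    have h1 : x ⬝ᵥ (A *ᵥ x)
        = inner ℝ y ((WithLp.equiv 2 (Fin n → ℝ)).symm (A *ᵥ x)) := by
      rw [hy, EuclideanSpace.inner_eq_star_dotProduct, dotProduct_comm]
      simp
    have h2 : inner ℝ y ((WithLp.equiv 2 (Fin n → ℝ)).symm (A *ᵥ x))
        ≤ ‖y‖ * ‖(WithLp.equiv 2 (Fin n → ℝ)).symm (A *ᵥ x)‖ := real_inner_le_norm _ _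
    have h3 : ‖(WithLp.equiv 2 (Fin n → ℝ)).symm (A *ᵥ x)‖ ≤ ‖A‖ * ‖y‖ :=
      Matrix.l2_opNorm_mulVec A y
    calc x ⬝ᵥ (A *ᵥ x) ≤ ‖y‖ * ‖(WithLp.equiv 2 (Fin n → ℝ)).symm (A *ᵥ x)‖ := h1 ▸ h2
      _ ≤ ‖y‖ * (‖A‖ * ‖y‖) := by
          exact mul_le_mul_of_nonneg_left h3 (norm_nonneg _)
      _ = ‖A‖ * (‖y‖ * ‖y‖) := by ring
  have hlt : ‖A‖ * (‖y‖ * ‖y‖) < ‖y‖ * ‖y‖ := by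
    have := mul_lt_mul_of_pos_right h (mul_pos hnorm hnorm)
    linarith
  have : star x ⬝ᵥ ((1 - A) *ᵥ x) = x ⬝ᵥ x - x ⬝ᵥ (A *ᵥ x) := by
    simp [Matrix.sub_mulVec, dotProduct_sub]
  rw [this, hxx]
  linarith

/-- Convergence of powers applied to every vector iff all eigenvalues `< 1`, for PSD matrices. -/
lemma conv_iff (hn : 0 < n) {M : Matrix (Fin n) (Fin n) ℝ} (hM : M.PosSemidef) :
    (∀ p₀ : Fin n → ℝ, Tendsto (fun t : ℕ => (M ^ t) *ᵥ p₀) atTop (nhds 0)) ↔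
      ∀ i, hM.1.eigenvalues i < 1 := by
  haveI : Nonempty (Fin n) := Fin.pos_iff_nonempty.mp hn
  constructor
  · intro h i
    set μ : ℝ := hM.1.eigenvalues i with hμ
    set v : Fin n → ℝ := ⇑(hM.1.eigenvectorBasis i) with hv
    have hv0 : v ≠ 0 := by
      intro hcon
      exact hM.1.eigenvectorBasis.orthonormal.ne_zero i (by
        ext j; exact congrFun hcon j)
    have hmul : ∀ t : ℕ, (M ^ t) *ᵥ v = μ ^ t • v := by
      intro t
      induction t with
      | zero => simp
      | succ t ih =>
        rw [pow_succ, ← Matrix.mulVec_mulVec, hM.1.mulVec_eigenvectorBasis,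
          Matrix.mulVec_smul, ih, smul_smul, ← pow_succ']
    have hten : Tendsto (fun t : ℕ => μ ^ t • v) atTop (nhds 0) := by
      have := h v
      simpa only [hmul] using this
    obtain ⟨j, hj⟩ := Function.ne_iff.mp hv0
    have hc : Tendsto (fun t : ℕ => μ ^ t * v j) atTop (nhds 0) := by
      have := (tendsto_pi_nhds.mp hten) j
      simpa using this
    have hpow : Tendsto (fun t : ℕ => μ ^ t) atTop (nhds 0) := by
      have := hc.mul_const (v j)⁻¹
      simpa [mul_assoc, mul_inv_cancel₀ hj] using this
    have habs : |μ| < 1 := tendsto_pow_atTop_nhds_zero_iff.mp hpow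
    exact lt_of_le_of_lt (le_abs_self _) habs
  · intro h p₀
    set U : Matrix (Fin n) (Fin n) ℝ :=
      (hM.1.eigenvectorUnitary : Matrix (Fin n) (Fin n) ℝ) with hU
    have h2 : U * star U = 1 := Unitary.coe_mul_star_self _
    have hMU : M * U = U * diagonal hM.1.eigenvalues := by
      conv_lhs => rw [hM.1.spectral_theorem]
      rw [ofReal_comp_eigenvalues hM.1, Unitary.conjStarAlgAut_apply, ← hU, Matrix.mul_assoc, Matrix.mul_assoc]
      rw [Matrix.star_eq_conjTranspose] at h2 ⊢
      rw [show Uᴴ * U = 1 from mul_eq_one_comm.mp h2, Matrix.mul_one]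
    set c : Fin n → ℝ := star U *ᵥ p₀ with hc
    set w : ℕ → Fin n → ℝ := fun t j => hM.1.eigenvalues j ^ t * c j with hw
    have hkey : ∀ t : ℕ, (M ^ t) *ᵥ p₀ = U *ᵥ w t := by
      intro t
      induction t with
      | zero =>
        have hw0 : w 0 = c := by funext j; simp [hw]
        rw [pow_zero, Matrix.one_mulVec, hw0, hc, Matrix.mulVec_mulVec, h2,
          Matrix.one_mulVec]
      | succ t ih =>
        have hstep : ∀ vv : Fin n → ℝ,
            (U * diagonal hM.1.eigenvalues) *ᵥ vv
              = U *ᵥ (fun j => hM.1.eigenvalues j * vv j) := by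
          intro vv
          have hd : diagonal hM.1.eigenvalues *ᵥ vv
              = fun j => hM.1.eigenvalues j * vv j := by
            funext j; rw [Matrix.mulVec_diagonal]
          rw [← Matrix.mulVec_mulVec, hd]
        have hwsucc : (fun j => hM.1.eigenvalues j * w t j) = w (t + 1) := by
          funext j
          simp only [hw]
          rw [← mul_assoc, ← pow_succ']
        rw [pow_succ', ← Matrix.mulVec_mulVec, ih, Matrix.mulVec_mulVec, hMU, hstep, hwsucc]
    have hwz : Tendsto w atTop (nhds 0) := by
      rw [tendsto_pi_nhds]
      intro j
      have h0 : (0 : ℝ) ≤ hM.1.eigenvalues j := hM.eigenvalues_nonneg j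
      have habs : |hM.1.eigenvalues j| < 1 := by
        rw [abs_of_nonneg h0]; exact h j
      have := (tendsto_pow_atTop_nhds_zero_iff.mpr habs).mul_const (c j)
      simpa using this
    have hL : Continuous fun v : Fin n → ℝ => U *ᵥ v := by
      exact LinearMap.continuous_of_finiteDimensional (Matrix.mulVecLin U)
    have := (hL.tendsto 0).comp hwz
    simp only [Function.comp_def] at this
    simpa only [hkey, Matrix.mulVec_zero] using this

end RecursionAux

open RecursionAux

/-- For symmetric PSD `A`, `B` with `‖A‖ < 1`, the linear recursion
`p_{t+1} = (A + B) p_t` converges to `0` for every initial condition iff the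
largest eigenvalue of `(I − A)⁻¹ B` is strictly less than `1`. -/
theorem recursion_tendsto_zero_iff {n : ℕ} (hn : 0 < n)
    (A B : Matrix (Fin n) (Fin n) ℝ)
    (hA : A.PosSemidef) (hB : B.PosSemidef)
    (hAnorm : ‖A‖ < 1) :
    (∀ p₀ : Fin n → ℝ,
      Tendsto (fun t : ℕ => ((A + B) ^ t).mulVec p₀) atTop (nhds 0)) ↔
    sSup (spectrum ℝ ((1 - A)⁻¹ * B)) < 1 := by
  classical
  haveI : Nonempty (Fin n) := Fin.pos_iff_nonempty.mp hn
  have hM : (A + B).PosSemidef := hA.add hB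
  -- `1 - A` is positive definite
  have hOneA : (1 - A).PosDef := posDef_one_sub_of_norm_lt hA.1 hAnorm
  have hNpd : ((1 - A)⁻¹).PosDef := hOneA.inv
  have hNps : ((1 - A)⁻¹).PosSemidef := hNpd.posSemidef
  set S : Matrix (Fin n) (Fin n) ℝ := by open scoped MatrixOrder in exact CFC.sqrt ((1 - A)⁻¹) with hSdef
  have hS : S.PosSemidef := by open scoped MatrixOrder in exact (CFC.sqrt_nonneg _).posSemidef
  have hSS : S * S = (1 - A)⁻¹ := by
    open scoped MatrixOrder in exact CFC.sqrt_mul_sqrt_self _ hNps.nonneg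
  have hSdetUnit : IsUnit S.det := by
    have hdet : S.det * S.det = ((1 - A)⁻¹).det := by rw [← Matrix.det_mul, hSS]
    have hd : IsUnit ((1 - A)⁻¹).det := (Matrix.isUnit_iff_isUnit_det _).mp hNpd.isUnit
    exact isUnit_of_mul_isUnit_left (hdet ▸ hd)
  have hSunit : IsUnit S := (Matrix.isUnit_iff_isUnit_det _).mpr hSdetUnit
  -- spectrum transfer: (1-A)⁻¹ * B is similar to S * B * S
  have hspec : spectrum ℝ ((1 - A)⁻¹ * B) = spectrum ℝ (S * B * S) := by
    have hcoe : (hSunit.unit : Matrix (Fin n) (Fin n) ℝ) = S := rfl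
    have hconj := spectrum.units_conjugate (R := ℝ) (a := S * B * S) (u := hSunit.unit)
    rw [← hconj]
    have hinv : S * (↑hSunit.unit⁻¹ : Matrix (Fin n) (Fin n) ℝ) = 1 := by
      have := hSunit.unit.mul_inv
      rwa [hcoe] at this
    have hx : S * (S * B * S) * (↑hSunit.unit⁻¹ : Matrix (Fin n) (Fin n) ℝ)
        = S * S * B := by
      calc S * (S * B * S) * (↑hSunit.unit⁻¹ : Matrix (Fin n) (Fin n) ℝ)
          = S * S * B * (S * (↑hSunit.unit⁻¹ : Matrix (Fin n) (Fin n) ℝ)) := by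
            simp only [Matrix.mul_assoc]
        _ = S * S * B := by rw [hinv, Matrix.mul_one]
    refine congrArg (spectrum ℝ) ?_
    rw [hcoe, hx, hSS]
  have hSBS : (S * B * S).PosSemidef := by
    have := hB.mul_mul_conjTranspose_same S
    rwa [hS.1] at this
  -- congruence: 1 - S*B*S = S * (1 - (A+B)) * S
  have hIA : S * (1 - A) * S = 1 := by
    have h1A : (1 - A) = (S * S)⁻¹ := by
      rw [hSS, Matrix.nonsing_inv_nonsing_inv _ ((Matrix.isUnit_iff_isUnit_det _).mp hOneA.isUnit)]
    rw [h1A, Matrix.mul_inv_rev, ← Matrix.mul_assoc,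
      Matrix.mul_nonsing_inv _ hSdetUnit, Matrix.one_mul,
      Matrix.nonsing_inv_mul _ hSdetUnit]
  have hSone : 1 - S * B * S = S * (1 - (A + B)) * S := by
    calc 1 - S * B * S = S * (1 - A) * S - S * B * S := by rw [hIA]
      _ = S * ((1 - A) - B) * S := by noncomm_ring
      _ = S * (1 - (A + B)) * S := by rw [sub_sub]
  have hcong : (1 - (A + B)).PosDef ↔ (1 - S * B * S).PosDef := by
    rw [hSone]
    constructor
    · intro h
      have := posDef_conj h hSunit
      rwa [hS.1] at this
    · intro h
      have hSinv : IsUnit S⁻¹ := Matrix.isUnit_nonsing_inv_iff.mpr hSunit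
      have hconj := posDef_conj h hSinv
      have hH : (S⁻¹)ᴴ = S⁻¹ := by
        rw [Matrix.conjTranspose_nonsing_inv, hS.1]
      rw [hH] at hconj
      have heq : S⁻¹ * (S * (1 - (A + B)) * S) * S⁻¹ = 1 - (A + B) := by
        calc S⁻¹ * (S * (1 - (A + B)) * S) * S⁻¹
            = (S⁻¹ * S) * (1 - (A + B)) * (S * S⁻¹) := by simp only [Matrix.mul_assoc]
          _ = 1 - (A + B) := by
              rw [Matrix.nonsing_inv_mul _ hSdetUnit, Matrix.mul_nonsing_inv _ hSdetUnit,
                Matrix.one_mul, Matrix.mul_one]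
      rwa [heq] at hconj
  rw [conv_iff hn hM, hspec, sSup_spectrum_lt_iff hn hSBS.1, ← posDef_one_sub_iff hSBS.1,
    ← posDef_one_sub_iff hM.1]
  exact hcong
end

section
/- Let J be a D×P real matrix, z ∈ ℝᴰ, η > 0, B ≤ D, and P_t be i.i.d. random diagonal batch matrices (indicator of uniformly random B-subsets). For the SGD update z_{t+1} = z_t − (η/B) J Jᵀ P_t z_t, the conditional expectation satisfies E[z_{t+1} z_{t+1}ᵀ | z_t] = z_t z_tᵀ − η(Θ̂ z_t z_tᵀ + z_t z_tᵀ Θ̂) + (β̃/β) η² Θ̂ z_t z_tᵀ Θ̂ + ((1 − β̃)/β) η² Θ̂ diag(z_t z_tᵀ) Θ̂, where Θ̂ = (1/D) J Jᵀ, β = B/D, β̃ = (B−1)/(D−1). -/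
open Matrix Finset

lemma card_filter_subset_powersetCard {α : Type*} [DecidableEq α] (u t : Finset α)
    (ht : t ⊆ u) {n : ℕ} (hn : t.card ≤ n) :
    ((u.powersetCard n).filter (fun s => t ⊆ s)).card
      = (u.card - t.card).choose (n - t.card) := by
  rw [← Finset.card_sdiff_of_subset ht, ← Finset.card_powersetCard]
  apply Finset.card_nbij' (fun s => s \ t) (fun s => s ∪ t)
  · intro s hs
    change s ∈ ((u.powersetCard n).filter (fun s => t ⊆ s)) at hs
    change s \ t ∈ ((u \ t).powersetCard (n - t.card))
    simp only [Finset.mem_filter, Finset.mem_powersetCard] at hs ⊢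
    obtain ⟨⟨hsu, hcard⟩, hts⟩ := hs
    exact ⟨Finset.sdiff_subset_sdiff hsu le_rfl, by rw [Finset.card_sdiff_of_subset hts, hcard]⟩
  · intro s hs
    change s ∈ ((u \ t).powersetCard (n - t.card)) at hs
    change s ∪ t ∈ ((u.powersetCard n).filter (fun s => t ⊆ s))
    simp only [Finset.mem_powersetCard, Finset.mem_filter, Finset.subset_sdiff] at hs ⊢
    obtain ⟨⟨hsu, hdisj⟩, hcard⟩ := hs
    refine ⟨⟨Finset.union_subset hsu ht, ?_⟩, Finset.subset_union_right⟩
    rw [Finset.card_union_of_disjoint hdisj, hcard, Nat.sub_add_cancel hn]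
  · intro s hs
    change s ∈ ((u.powersetCard n).filter (fun s => t ⊆ s)) at hs
    simp only [Finset.mem_filter] at hs
    exact Finset.sdiff_union_of_subset hs.2
  · intro s hs
    change s ∈ ((u \ t).powersetCard (n - t.card)) at hs
    simp only [Finset.mem_powersetCard, Finset.subset_sdiff] at hs
    change (s ∪ t) \ t = s
    rw [Finset.union_sdiff_right, Finset.sdiff_eq_self_iff_disjoint.mpr hs.1.2]

lemma vmv_mulVec {n m : Type*} [Fintype m] (M : Matrix n m ℝ) (u : m → ℝ) (v : n → ℝ) :
    vecMulVec (M.mulVec u) v = M * vecMulVec u v := by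
  ext i j
  simp only [vecMulVec_apply, mulVec, dotProduct, mul_apply, Finset.sum_mul, mul_assoc]

lemma mulVec_vmv {n m : Type*} [Fintype m] (M : Matrix n m ℝ) (u : m → ℝ) (v : n → ℝ) :
    vecMulVec v (M.mulVec u) = vecMulVec v u * Mᵀ := by
  ext i j
  simp only [vecMulVec_apply, mulVec, dotProduct, mul_apply, transpose_apply, Finset.mul_sum]
  exact Finset.sum_congr rfl fun k _ => by ring

/-- One step of minibatch SGD on a linear model: with
`z' = z − (η/B) J Jᵀ P z` for a uniformly random batch matrix `P`, the
conditional second moment satisfies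
`E[z' z'ᵀ] = zzᵀ − η(Θ̂ zzᵀ + zzᵀ Θ̂) + (β̃/β) η² Θ̂ zzᵀ Θ̂
  + ((1 − β̃)/β) η² Θ̂ diag(zzᵀ) Θ̂`,
where `Θ̂ = (1/D) J Jᵀ`, `β = B/D`, `β̃ = (B−1)/(D−1)`. -/
theorem second_moment_sgd_step {D P B : ℕ} (hB : 1 ≤ B) (hBD : B ≤ D)
    (η : ℝ) (hη : 0 < η)
    (J : Matrix (Fin D) (Fin P) ℝ) (z : Fin D → ℝ) :
    ((D.choose B : ℝ))⁻¹ •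
      ∑ s ∈ (Finset.univ : Finset (Fin D)).powersetCard B,
        (let z' := z - (η / (B : ℝ)) •
            (J * Jᵀ * Matrix.diagonal (fun i => if i ∈ s then (1 : ℝ) else 0)).mulVec z
         Matrix.vecMulVec z' z') =
    (let Θ : Matrix (Fin D) (Fin D) ℝ := ((D : ℝ))⁻¹ • (J * Jᵀ)
     let Z : Matrix (Fin D) (Fin D) ℝ := Matrix.vecMulVec z z
     let β : ℝ := (B : ℝ) / (D : ℝ)
     let βt : ℝ := ((B : ℝ) - 1) / ((D : ℝ) - 1)
     Z - η • (Θ * Z + Z * Θ) + (βt / β * η ^ 2) • (Θ * Z * Θ) +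
       ((1 - βt) / β * η ^ 2) • (Θ * Matrix.diagonal (fun i => Z i i) * Θ)) := by
  have hD : 1 ≤ D := hB.trans hBD
  have hD0 : (D : ℝ) ≠ 0 := Nat.cast_ne_zero.mpr (by omega)
  have hB0 : (B : ℝ) ≠ 0 := Nat.cast_ne_zero.mpr (by omega)
  have hN0 : (D.choose B : ℝ) ≠ 0 := Nat.cast_ne_zero.mpr (Nat.choose_pos hBD).ne'
  show ((D.choose B : ℝ))⁻¹ •
      ∑ s ∈ (Finset.univ : Finset (Fin D)).powersetCard B,
        Matrix.vecMulVec
          (z - (η / (B : ℝ)) •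
            (J * Jᵀ * Matrix.diagonal (fun i => if i ∈ s then (1 : ℝ) else 0)).mulVec z)
          (z - (η / (B : ℝ)) •
            (J * Jᵀ * Matrix.diagonal (fun i => if i ∈ s then (1 : ℝ) else 0)).mulVec z) =
    Matrix.vecMulVec z z
      - η • ((((D : ℝ))⁻¹ • (J * Jᵀ)) * Matrix.vecMulVec z z
              + Matrix.vecMulVec z z * (((D : ℝ))⁻¹ • (J * Jᵀ)))
      + ((((B : ℝ) - 1) / ((D : ℝ) - 1)) / ((B : ℝ) / (D : ℝ)) * η ^ 2) •
          ((((D : ℝ))⁻¹ • (J * Jᵀ)) * Matrix.vecMulVec z z * (((D : ℝ))⁻¹ • (J * Jᵀ)))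
      + ((1 - ((B : ℝ) - 1) / ((D : ℝ) - 1)) / ((B : ℝ) / (D : ℝ)) * η ^ 2) •
          ((((D : ℝ))⁻¹ • (J * Jᵀ)) *
            Matrix.diagonal (fun i => Matrix.vecMulVec z z i i) * (((D : ℝ))⁻¹ • (J * Jᵀ)))
  set N : ℝ := (D.choose B : ℝ) with hN
  set β : ℝ := (B : ℝ) / (D : ℝ) with hβ
  set βt : ℝ := ((B : ℝ) - 1) / ((D : ℝ) - 1) with hβt
  set c : ℝ := η / B with hc
  set A : Matrix (Fin D) (Fin D) ℝ := J * Jᵀ with hA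
  set Z : Matrix (Fin D) (Fin D) ℝ := vecMulVec z z with hZ
  set Ps : Finset (Fin D) → Matrix (Fin D) (Fin D) ℝ :=
    fun s => Matrix.diagonal (fun i => if i ∈ s then (1 : ℝ) else 0) with hPs
  have hAT : Aᵀ = A := by rw [hA, transpose_mul, transpose_transpose]
  -- counting facts
  have hcount1 : ∀ i : Fin D,
      (((univ : Finset (Fin D)).powersetCard B).filter (fun s => i ∈ s)).card
        = (D - 1).choose (B - 1) := by
    intro i
    have h := card_filter_subset_powersetCard (univ : Finset (Fin D)) {i}
      (Finset.subset_univ _) (n := B) (by simpa using hB)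
    simpa [Finset.singleton_subset_iff, Finset.card_univ] using h
  have hcount1' : ∀ i : Fin D,
      (∑ s ∈ (univ : Finset (Fin D)).powersetCard B,
        (if i ∈ s then (1:ℝ) else 0)) = ((D-1).choose (B-1) : ℝ) := by
    intro i
    rw [Finset.sum_boole, hcount1]
  have hnat1 : D * (D - 1).choose (B - 1) = D.choose B * B := by
    have h := Nat.add_one_mul_choose_eq (D - 1) (B - 1)
    have e1 : D - 1 + 1 = D := by omega
    have e2 : B - 1 + 1 = B := by omega
    rwa [e1, e2] at h
  have hr1' : (D : ℝ) * ((D - 1).choose (B - 1) : ℝ) = N * B := by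
    have h := congrArg (fun n : ℕ => (n : ℝ)) hnat1
    push_cast at h
    rw [hN]; exact h
  have hr1 : ((D - 1).choose (B - 1) : ℝ) = N * β := by
    rw [hβ]; field_simp; linarith [hr1']
  -- per-summand rewrite
  have hbody : ∀ s ∈ (univ : Finset (Fin D)).powersetCard B,
      Matrix.vecMulVec
          (z - (η / (B : ℝ)) • (A * Ps s).mulVec z)
          (z - (η / (B : ℝ)) • (A * Ps s).mulVec z)
      = Z - c • (A * (Ps s * Z) + Z * (Ps s * A))
          + (c^2) • (A * (Ps s * Z * Ps s) * A) := by
    intro s _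
    set y : Fin D → ℝ := (A * Ps s).mulVec z with hy
    have hexp : vecMulVec (z - c • y) (z - c • y)
        = Z - c • (vecMulVec y z + vecMulVec z y) + (c^2) • vecMulVec y y := by
      ext i j
      simp only [vecMulVec_apply, Matrix.sub_apply, Matrix.add_apply, Matrix.smul_apply,
        Pi.sub_apply, Pi.smul_apply, smul_eq_mul, hZ]
      ring
    rw [hc] at hexp
    rw [hexp]
    have hPsT : (Ps s)ᵀ = Ps s := Matrix.diagonal_transpose _
    have h1 : vecMulVec y z = A * (Ps s * Z) := by
      rw [hy, vmv_mulVec, mul_assoc]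
    have h2 : vecMulVec z y = Z * (Ps s * A) := by
      rw [hy, mulVec_vmv, transpose_mul, hPsT, hAT]
    have h3 : vecMulVec y y = A * (Ps s * Z * Ps s) * A := by
      rw [hy, vmv_mulVec, mulVec_vmv, transpose_mul, hPsT, hAT]
      noncomm_ring
    rw [h1, h2, h3]
  rw [Finset.sum_congr rfl hbody]
  have hcard : ((univ : Finset (Fin D)).powersetCard B).card = D.choose B := by
    rw [Finset.card_powersetCard, Finset.card_univ, Fintype.card_fin]
  have hS1 : (∑ s ∈ (univ : Finset (Fin D)).powersetCard B, Ps s)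
      = (N * β) • (1 : Matrix (Fin D) (Fin D) ℝ) := by
    ext i j
    rw [Matrix.sum_apply]
    by_cases hij : i = j
    · subst hij
      simp only [hPs, Matrix.diagonal_apply_eq, Matrix.smul_apply, Matrix.one_apply_eq,
        smul_eq_mul, mul_one]
      rw [hcount1' i, hr1]
    · simp [hPs, Matrix.diagonal_apply_ne _ hij, Matrix.one_apply_ne hij]
  have hS2 : (∑ s ∈ (univ : Finset (Fin D)).powersetCard B, Ps s * Z * Ps s)
      = (N * β * βt) • Z + (N * β * (1 - βt)) • Matrix.diagonal (fun i => Z i i) := by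
    ext i j
    rw [Matrix.sum_apply]
    have hentry : ∀ s, (Ps s * Z * Ps s) i j
        = (if i ∈ s then (1:ℝ) else 0) * (if j ∈ s then (1:ℝ) else 0) * Z i j := by
      intro s
      simp only [hPs, Matrix.mul_diagonal, Matrix.diagonal_mul]
      ring
    simp only [hentry]
    rw [← Finset.sum_mul]
    by_cases hij : i = j
    · subst hij
      have he : ∀ s ∈ (univ : Finset (Fin D)).powersetCard B,
          (if i ∈ s then (1:ℝ) else 0) * (if i ∈ s then (1:ℝ) else 0)
            = (if i ∈ s then (1:ℝ) else 0) := by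
        intro s _; by_cases h : i ∈ s <;> simp [h]
      rw [Finset.sum_congr rfl he, hcount1' i, hr1]
      simp only [Matrix.add_apply, Matrix.smul_apply, Matrix.diagonal_apply_eq, smul_eq_mul]
      ring
    · have hD2 : 2 ≤ D := by
        have : 1 < Fintype.card (Fin D) := Fintype.one_lt_card_iff_nontrivial.mpr ⟨⟨i, j, hij⟩⟩
        simp only [Fintype.card_fin] at this; omega
      have hsum : (∑ s ∈ (univ : Finset (Fin D)).powersetCard B,
          (if i ∈ s then (1:ℝ) else 0) * (if j ∈ s then (1:ℝ) else 0))
          = ((((univ : Finset (Fin D)).powersetCard B).filter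
              (fun s => i ∈ s ∧ j ∈ s)).card : ℝ) := by
        rw [Finset.card_filter]
        push_cast
        refine Finset.sum_congr rfl fun s _ => ?_
        by_cases h1 : i ∈ s <;> by_cases h2 : j ∈ s <;> simp [h1, h2]
      have hcount2 : ((((univ : Finset (Fin D)).powersetCard B).filter
              (fun s => i ∈ s ∧ j ∈ s)).card : ℝ) = N * β * βt := by
        rcases Nat.lt_or_ge B 2 with hB1 | hB2
        · have hB1' : B = 1 := by omega
          subst hB1'
          have hempty : (((univ : Finset (Fin D)).powersetCard 1).filter
              (fun s => i ∈ s ∧ j ∈ s)) = ∅ := by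
            ext s
            simp only [Finset.mem_filter, Finset.mem_powersetCard, Finset.notMem_empty,
              iff_false, not_and]
            rintro ⟨-, hc'⟩ hi hj
            have := Finset.one_lt_card.mpr ⟨i, hi, j, ⟨hj, hij⟩⟩
            omega
          rw [hempty]
          simp [hβt]
        · have hpred : (fun s : Finset (Fin D) => i ∈ s ∧ j ∈ s)
              = (fun s => ({i, j} : Finset (Fin D)) ⊆ s) := by
            funext s
            simp [Finset.insert_subset_iff]
          have hcardij : ({i, j} : Finset (Fin D)).card = 2 := Finset.card_pair hij
          have h := card_filter_subset_powersetCard (univ : Finset (Fin D)) {i, j}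
            (Finset.subset_univ _) (n := B) (by omega)
          simp only [hpred]
          rw [h, hcardij, Finset.card_univ, Fintype.card_fin]
          have hnat2 : (D - 1) * (D - 2).choose (B - 2) = (D - 1).choose (B - 1) * (B - 1) := by
            have h2 := Nat.add_one_mul_choose_eq (D - 2) (B - 2)
            have e1 : D - 2 + 1 = D - 1 := by omega
            have e2 : B - 2 + 1 = B - 1 := by omega
            rwa [e1, e2] at h2
          have hD1 : ((D : ℝ) - 1) ≠ 0 := by
            have : (2 : ℝ) ≤ (D : ℝ) := by exact_mod_cast hD2
            linarith
          have hr2 : ((D : ℝ) - 1) * ((D - 2).choose (B - 2) : ℝ)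
              = ((D - 1).choose (B - 1) : ℝ) * ((B : ℝ) - 1) := by
            have h3 := congrArg (fun n : ℕ => (n : ℝ)) hnat2
            push_cast [Nat.cast_sub hD, Nat.cast_sub hB] at h3
            exact h3
          rw [hr1] at hr2
          rw [hβt]
          field_simp
          linarith [hr2]
      rw [hsum, hcount2]
      simp only [Matrix.add_apply, Matrix.smul_apply, smul_eq_mul,
        Matrix.diagonal_apply_ne _ hij, mul_zero, add_zero]
  -- assemble the sum
  simp only [Finset.sum_add_distrib, Finset.sum_sub_distrib, ← Finset.smul_sum,
    ← Finset.mul_sum, ← Finset.sum_mul, Finset.sum_const, hcard]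
  rw [hS1, hS2]
  -- now pure module algebra
  have hdZ : Matrix.diagonal (fun i => Z i i) = Matrix.diagonal (fun i => vecMulVec z z i i) := rfl
  rw [← hdZ]
  simp only [smul_mul_assoc, mul_smul_comm, one_mul, mul_one, mul_add, add_mul,
    Matrix.mul_assoc]
  have hN0' : ((D.choose B : ℕ) : ℝ) ≠ 0 := hN0
  match_scalars <;> (simp only [hc, hβ, hN]; field_simp; try ring)
end
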